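/- Combining the decomposition and DPI steps: under the disentanglement assumptions, I(x^i; z_p^j, z_v^i) ≥ I(z_p^i; z_p^j) + H(z_v^i). -/

import Mathlib

open Finset

private lemma sum_zero1 {A : Type*} [Fintype A] {f : A → ℝ} (hf : ∀ a, 0 ≤ f a)
    (h : ∑ a, f a = 0) (a : A) : f a = 0 :=
  (Finset.sum_eq_zero_iff_of_nonneg (fun i _ => hf i)).mp h a (Finset.mem_univ a)

private lemma le_sum1 {A : Type*} [Fintype A] {f : A → ℝ} (hf : ∀ a, 0 ≤ f a) (a : A) :
    f a ≤ ∑ a', f a' :=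
  Finset.single_le_sum (fun i _ => hf i) (Finset.mem_univ a)

private lemma gibbs {ι : Type*} [Fintype ι] (f g : ι → ℝ)
    (hf : ∀ i, 0 ≤ f i) (hg : ∀ i, 0 ≤ g i) (h : ∀ i, g i = 0 → f i = 0) :
    (∑ i, f i) - (∑ i, g i) ≤ ∑ i, f i * Real.log (f i / g i) := by
  rw [← Finset.sum_sub_distrib]
  refine Finset.sum_le_sum fun i _ => ?_
  rcases (hf i).lt_or_eq with hpos | h0
  · have hgpos : 0 < g i := by
      rcases (hg i).lt_or_eq with h1 | h1
      · exact h1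
      · exact absurd (h i h1.symm) (ne_of_gt hpos)
    have hlog : Real.log (g i / f i) ≤ g i / f i - 1 :=
      Real.log_le_sub_one_of_pos (div_pos hgpos hpos)
    have hlog2 : 1 - g i / f i ≤ Real.log (f i / g i) := by
      rw [Real.log_div (ne_of_gt hpos) (ne_of_gt hgpos)]
      rw [Real.log_div (ne_of_gt hgpos) (ne_of_gt hpos)] at hlog
      linarith
    have h3 := mul_le_mul_of_nonneg_left hlog2 hpos.le
    have h4 : f i * (1 - g i / f i) = f i - g i := by field_simp
    linarith
  · rw [← h0, zero_mul]
    linarith [hg i]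

/-- `I(x^i; z_p^j, z_v^i) ≥ I(z_p^i; z_p^j) + H(z_v^i)`.
`X` is the type of poses `x^i`, `A` of `z_p^i`, `V` of `z_v^i`, `B` of `z_p^j`;
`p` is the joint pmf of `(x^i, z_p^i, z_v^i, z_p^j)`. -/
theorem stmt_12 {X A V B : Type*} [Fintype X] [Fintype A] [Fintype V] [Fintype B]
    (p : X → A → V → B → ℝ)
    (hnn : ∀ x a v b, 0 ≤ p x a v b)
    (hsum : ∑ x, ∑ a, ∑ v, ∑ b, p x a v b = 1)
    (pX : X → ℝ) (pA : A → ℝ) (pV : V → ℝ) (pB : B → ℝ)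
    (pXB : X → B → ℝ) (pXV : X → V → ℝ) (pXAV : X → A → V → ℝ)
    (pXBV : X → B → V → ℝ) (pAB : A → B → ℝ) (pAV : A → V → ℝ) (pBV : B → V → ℝ)
    (hpX : ∀ x, pX x = ∑ a, ∑ v, ∑ b, p x a v b)
    (hpA : ∀ a, pA a = ∑ x, ∑ v, ∑ b, p x a v b)
    (hpV : ∀ v, pV v = ∑ x, ∑ a, ∑ b, p x a v b)
    (hpB : ∀ b, pB b = ∑ x, ∑ a, ∑ v, p x a v b)
    (hpXB : ∀ x b, pXB x b = ∑ a, ∑ v, p x a v b)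
    (hpXV : ∀ x v, pXV x v = ∑ a, ∑ b, p x a v b)
    (hpXAV : ∀ x a v, pXAV x a v = ∑ b, p x a v b)
    (hpXBV : ∀ x b v, pXBV x b v = ∑ a, p x a v b)
    (hpAB : ∀ a b, pAB a b = ∑ x, ∑ v, p x a v b)
    (hpAV : ∀ a v, pAV a v = ∑ x, ∑ b, p x a v b)
    (hpBV : ∀ b v, pBV b v = ∑ x, ∑ a, p x a v b)
    -- Markov: `z_p^j` is conditionally independent of `(z_p^i, z_v^i)` given `x^i`
    (hmarkov : ∀ x a v b, 0 < pX x → p x a v b * pX x = pXAV x a v * pXB x b)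
    -- (a) independence of `z_p^j` and `z_v^i`, marginally and conditionally on `x^i`
    (hindep : ∀ b v, pBV b v = pB b * pV v)
    (hcond : ∀ x b v, 0 < pX x → pXBV x b v * pX x = pXB x b * pXV x v)
    -- (b) `I(z_v^i; z_p^j) = 0` and `I(z_p^i; z_v^i) = 0`
    (hIvb : ∑ b, ∑ v, pBV b v * Real.log (pBV b v / (pB b * pV v)) = 0)
    (hIav : ∑ a, ∑ v, pAV a v * Real.log (pAV a v / (pA a * pV v)) = 0)
    -- (c) `z_v^i` is a deterministic function of `x^i`
    (hdet : ∀ x v v', 0 < pXV x v → 0 < pXV x v' → v = v') :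
    (∑ a, ∑ b, pAB a b * Real.log (pAB a b / (pA a * pB b)))
        + (-∑ v, pV v * Real.log (pV v))
      ≤ ∑ x, ∑ b, ∑ v, pXBV x b v * Real.log (pXBV x b v / (pX x * pBV b v)) := by
  classical
  -- nonnegativity of marginals
  have hnnXAB : ∀ x a b, 0 ≤ ∑ v, p x a v b :=
    fun x a b => Finset.sum_nonneg fun v _ => hnn x a v b
  have hnnXA : ∀ x a, 0 ≤ ∑ v, ∑ b, p x a v b :=
    fun x a => Finset.sum_nonneg fun v _ => Finset.sum_nonneg fun b _ => hnn x a v b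
  have hnnXB : ∀ x b, 0 ≤ pXB x b := fun x b => by
    rw [hpXB]; exact Finset.sum_nonneg fun a _ => hnnXAB x a b
  have hnnXV : ∀ x v, 0 ≤ pXV x v := fun x v => by
    rw [hpXV]; exact Finset.sum_nonneg fun a _ => Finset.sum_nonneg fun b _ => hnn x a v b
  have hnnXBV : ∀ x b v, 0 ≤ pXBV x b v := fun x b v => by
    rw [hpXBV]; exact Finset.sum_nonneg fun a _ => hnn x a v b
  have hnnAB : ∀ a b, 0 ≤ pAB a b := fun a b => by
    rw [hpAB]; exact Finset.sum_nonneg fun x _ => hnnXAB x a b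
  have hnnA : ∀ a, 0 ≤ pA a := fun a => by
    rw [hpA]; exact Finset.sum_nonneg fun x _ => hnnXA x a
  -- marginal identities
  have mXB : ∀ x b, ∑ v, pXBV x b v = pXB x b := fun x b => by
    rw [hpXB]; simp only [hpXBV]; exact Finset.sum_comm
  have mXV : ∀ x v, ∑ b, pXBV x b v = pXV x v := fun x v => by
    rw [hpXV]; simp only [hpXBV]; exact Finset.sum_comm
  have mXtot : ∀ x, ∑ v, pXV x v = pX x := fun x => by
    rw [hpX]; simp only [hpXV]; exact Finset.sum_comm
  have mV : ∀ v, ∑ x, pXV x v = pV v := fun v => by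
    rw [hpV]; simp only [hpXV]
  have mB_ab : ∀ x b, ∑ a, (∑ v, p x a v b) = pXB x b := fun x b => (hpXB x b).symm
  have mAB : ∀ a b, ∑ x, (∑ v, p x a v b) = pAB a b := fun a b => (hpAB a b).symm
  have mXA_A : ∀ a, ∑ x, (∑ v, ∑ b, p x a v b) = pA a := fun a => (hpA a).symm
  have mA_b : ∀ a, ∑ b, pAB a b = pA a := fun a => by
    rw [hpA]; simp only [hpAB]
    rw [Finset.sum_comm]
    exact Finset.sum_congr rfl fun x _ => Finset.sum_comm
  -- dominance facts
  have hleXBV_X : ∀ x b v, pXBV x b v ≤ pX x := fun x b v => by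
    rw [hpXBV, hpX]
    refine Finset.sum_le_sum fun a _ => ?_
    calc p x a v b ≤ ∑ b', p x a v b' := le_sum1 (fun b' => hnn x a v b') b
      _ ≤ ∑ v', ∑ b', p x a v' b' :=
        le_sum1 (fun v' => Finset.sum_nonneg fun b' _ => hnn x a v' b') v
  have hleXB_B : ∀ x b, pXB x b ≤ pB b := fun x b => by
    rw [hpXB, hpB]
    exact le_sum1 (fun x' => Finset.sum_nonneg fun a _ =>
      Finset.sum_nonneg fun v _ => hnn x' a v b) x
  have hleXV_V : ∀ x v, pXV x v ≤ pV v := fun x v => by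
    rw [hpXV, hpV]
    exact le_sum1 (fun x' => Finset.sum_nonneg fun a _ =>
      Finset.sum_nonneg fun b _ => hnn x' a v b) x
  have hleXV_X : ∀ x v, pXV x v ≤ pX x := fun x v => by
    rw [← mXtot x]; exact le_sum1 (fun v' => hnnXV x v') v
  have hleXAB_XA : ∀ x a b, (∑ v, p x a v b) ≤ ∑ v, ∑ b', p x a v b' :=
    fun x a b => Finset.sum_le_sum fun v _ => le_sum1 (fun b' => hnn x a v b') b
  have hleXA_X : ∀ x a, (∑ v, ∑ b, p x a v b) ≤ pX x := fun x a => by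
    rw [hpX]; exact le_sum1 (fun a' => hnnXA x a') a
  have hleXAB_XB : ∀ x a b, (∑ v, p x a v b) ≤ pXB x b := fun x a b => by
    rw [← mB_ab]; exact le_sum1 (fun a' => hnnXAB x a' b) a
  have hleXAB_AB : ∀ x a b, (∑ v, p x a v b) ≤ pAB a b := fun x a b => by
    rw [← mAB]; exact le_sum1 (fun x' => hnnXAB x' a b) x
  have hleXA_A : ∀ x a, (∑ v, ∑ b, p x a v b) ≤ pA a := fun x a => by
    rw [← mXA_A]; exact le_sum1 (fun x' => hnnXA x' a) x
  -- Step A : decomposition of I(x ; B,V)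
  have stepA : ∀ x b v, pXBV x b v * Real.log (pXBV x b v / (pX x * pBV b v))
      = pXBV x b v * Real.log (pXB x b / (pX x * pB b))
      + pXBV x b v * Real.log (pXV x v / (pX x * pV v)) := by
    intro x b v
    rcases (hnnXBV x b v).lt_or_eq with hpos | h0
    · have hXpos : 0 < pX x := lt_of_lt_of_le hpos (hleXBV_X x b v)
      have hc := hcond x b v hXpos
      have hprod : 0 < pXB x b * pXV x v := by rw [← hc]; exact mul_pos hpos hXpos
      have hXBpos : 0 < pXB x b := by
        rcases (hnnXB x b).lt_or_eq with h1 | h1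
        · exact h1
        · rw [← h1, zero_mul] at hprod; linarith
      have hXVpos : 0 < pXV x v := by
        rcases (hnnXV x v).lt_or_eq with h1 | h1
        · exact h1
        · rw [← h1, mul_zero] at hprod; linarith
      have hBpos : 0 < pB b := lt_of_lt_of_le hXBpos (hleXB_B x b)
      have hVpos : 0 < pV v := lt_of_lt_of_le hXVpos (hleXV_V x v)
      have hr : pXBV x b v / (pX x * pBV b v)
          = (pXB x b / (pX x * pB b)) * (pXV x v / (pX x * pV v)) := by
        rw [hindep]
        field_simp
        linear_combination hc
      rw [hr, Real.log_mul (ne_of_gt (div_pos hXBpos (mul_pos hXpos hBpos)))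
        (ne_of_gt (div_pos hXVpos (mul_pos hXpos hVpos))), mul_add]
    · rw [← h0]; ring
  have hRHS : (∑ x, ∑ b, ∑ v, pXBV x b v * Real.log (pXBV x b v / (pX x * pBV b v)))
      = (∑ x, ∑ b, pXB x b * Real.log (pXB x b / (pX x * pB b)))
        + (∑ x, ∑ v, pXV x v * Real.log (pXV x v / (pX x * pV v))) := by
    simp only [stepA, Finset.sum_add_distrib]
    congr 1
    · refine Finset.sum_congr rfl fun x _ => Finset.sum_congr rfl fun b _ => ?_
      rw [← Finset.sum_mul, mXB]
    · refine Finset.sum_congr rfl fun x _ => ?_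
      rw [Finset.sum_comm]
      refine Finset.sum_congr rfl fun v _ => ?_
      rw [← Finset.sum_mul, mXV]
  -- Step B : I(x ; V) = H(V)
  have stepB : ∀ x v, pXV x v * Real.log (pXV x v / (pX x * pV v))
      = pXV x v * (-Real.log (pV v)) := by
    intro x v
    rcases (hnnXV x v).lt_or_eq with hpos | h0
    · have hXpos : 0 < pX x := lt_of_lt_of_le hpos (hleXV_X x v)
      have hVpos : 0 < pV v := lt_of_lt_of_le hpos (hleXV_V x v)
      have hEq : pXV x v = pX x := by
        rw [← mXtot x]
        symm
        refine Finset.sum_eq_single v (fun v' _ hne => ?_) (fun h => absurd (Finset.mem_univ v) h)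
        rcases (hnnXV x v').lt_or_eq with h1 | h1
        · exact absurd (hdet x v v' hpos h1).symm hne
        · exact h1.symm
      have hratio : pXV x v / (pX x * pV v) = (pV v)⁻¹ := by
        rw [hEq]; field_simp
      rw [hratio, Real.log_inv]
    · rw [← h0]; ring
  have hIV : (∑ x, ∑ v, pXV x v * Real.log (pXV x v / (pX x * pV v)))
      = -∑ v, pV v * Real.log (pV v) := by
    simp only [stepB]
    rw [Finset.sum_comm]
    have hterm : ∀ v, ∑ x, pXV x v * (-Real.log (pV v)) = -(pV v * Real.log (pV v)) :=
      fun v => by rw [← Finset.sum_mul, mV]; ring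
    simp only [hterm, Finset.sum_neg_distrib]
  -- Step C : data processing inequality  I(A;B) ≤ I(X;B)
  have stepC : ∀ x a b,
      (∑ v, p x a v b) * Real.log (pXB x b / (pX x * pB b))
        - (∑ v, p x a v b) * Real.log (pAB a b / (pA a * pB b))
      = (∑ v, p x a v b) *
          Real.log ((∑ v, p x a v b) / ((∑ v, ∑ b', p x a v b') * pAB a b / pA a)) := by
    intro x a b
    rcases (hnnXAB x a b).lt_or_eq with hpos | h0
    · have hXApos : 0 < ∑ v, ∑ b', p x a v b' := lt_of_lt_of_le hpos (hleXAB_XA x a b)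
      have hXpos : 0 < pX x := lt_of_lt_of_le hXApos (hleXA_X x a)
      have hXBpos : 0 < pXB x b := lt_of_lt_of_le hpos (hleXAB_XB x a b)
      have hABpos : 0 < pAB a b := lt_of_lt_of_le hpos (hleXAB_AB x a b)
      have hApos : 0 < pA a := lt_of_lt_of_le hXApos (hleXA_A x a)
      have hBpos : 0 < pB b := lt_of_lt_of_le hXBpos (hleXB_B x b)
      have hM : (∑ v, p x a v b) * pX x = (∑ v, ∑ b', p x a v b') * pXB x b := by
        rw [Finset.sum_mul, Finset.sum_mul]
        refine Finset.sum_congr rfl fun v _ => ?_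
        rw [hmarkov x a v b hXpos, hpXAV]
      have hr : (∑ v, p x a v b) / ((∑ v, ∑ b', p x a v b') * pAB a b / pA a)
          = (pXB x b / (pX x * pB b)) / (pAB a b / (pA a * pB b)) := by
        have hsub : (∑ v, p x a v b) = (∑ v, ∑ b', p x a v b') * pXB x b / pX x := by
          field_simp
          linarith [hM]
        rw [hsub]
        have h1 := ne_of_gt hXApos
        have h2 := ne_of_gt hXpos
        have h3 := ne_of_gt hABpos
        have h4 := ne_of_gt hApos
        have h5 := ne_of_gt hBpos
        have h6 := ne_of_gt hXBpos
        field_simp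
      rw [← mul_sub, hr, Real.log_div (ne_of_gt (div_pos hXBpos (mul_pos hXpos hBpos)))
        (ne_of_gt (div_pos hABpos (mul_pos hApos hBpos)))]
    · rw [← h0]; ring
  have hIB_eq : (∑ x, ∑ b, pXB x b * Real.log (pXB x b / (pX x * pB b)))
      = ∑ x, ∑ a, ∑ b, (∑ v, p x a v b) * Real.log (pXB x b / (pX x * pB b)) := by
    refine Finset.sum_congr rfl fun x _ => ?_
    rw [Finset.sum_comm]
    refine Finset.sum_congr rfl fun b _ => ?_
    rw [← Finset.sum_mul, mB_ab]
  have hIAB_eq : (∑ a, ∑ b, pAB a b * Real.log (pAB a b / (pA a * pB b)))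
      = ∑ x, ∑ a, ∑ b, (∑ v, p x a v b) * Real.log (pAB a b / (pA a * pB b)) := by
    symm
    rw [Finset.sum_comm]
    refine Finset.sum_congr rfl fun a _ => ?_
    rw [Finset.sum_comm]
    refine Finset.sum_congr rfl fun b _ => ?_
    rw [← Finset.sum_mul, mAB]
  have hsf : ∑ x, ∑ a, ∑ b, (∑ v, p x a v b) = 1 := by
    rw [← hsum]
    exact Finset.sum_congr rfl fun x _ => Finset.sum_congr rfl fun a _ => Finset.sum_comm
  have hsg : ∑ x, ∑ a, ∑ b, (∑ v, ∑ b', p x a v b') * pAB a b / pA a ≤ 1 := by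
    rw [Finset.sum_comm]
    have hterm : ∀ a, (∑ x, ∑ b, (∑ v, ∑ b', p x a v b') * pAB a b / pA a) ≤ pA a := by
      intro a
      have h1 : (∑ x, ∑ b, (∑ v, ∑ b', p x a v b') * pAB a b / pA a)
          = (∑ x, ∑ v, ∑ b, p x a v b) * (∑ b, pAB a b) / pA a := by
        have hx : ∀ x, (∑ b, (∑ v, ∑ b', p x a v b') * pAB a b / pA a)
            = (∑ v, ∑ b', p x a v b') * (∑ b, pAB a b) / pA a := by
          intro x
          rw [← Finset.sum_div, ← Finset.mul_sum]
        simp only [hx]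
        rw [← Finset.sum_div, ← Finset.sum_mul]
      rw [h1, mXA_A, mA_b]
      rcases eq_or_ne (pA a) 0 with h0 | h0
      · rw [h0]; simp
      · rw [mul_div_assoc, div_self h0, mul_one]
    calc (∑ a, ∑ x, ∑ b, (∑ v, ∑ b', p x a v b') * pAB a b / pA a)
        ≤ ∑ a, pA a := Finset.sum_le_sum fun a _ => hterm a
      _ = 1 := by
          simp only [hpA]
          rw [Finset.sum_comm]
          exact hsum
  have hKL : 0 ≤ ∑ x, ∑ a, ∑ b, (∑ v, p x a v b) *
      Real.log ((∑ v, p x a v b) / ((∑ v, ∑ b', p x a v b') * pAB a b / pA a)) := by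
    have hgb := gibbs (ι := X × A × B)
      (fun t => ∑ v, p t.1 t.2.1 v t.2.2)
      (fun t => (∑ v, ∑ b', p t.1 t.2.1 v b') * pAB t.2.1 t.2.2 / pA t.2.1)
      (fun t => hnnXAB t.1 t.2.1 t.2.2)
      (fun t => div_nonneg (mul_nonneg (hnnXA t.1 t.2.1) (hnnAB t.2.1 t.2.2)) (hnnA t.2.1))
      ?_
    · simp only [Fintype.sum_prod_type] at hgb
      have h1 : ∑ x, ∑ a, ∑ b, (∑ v, p x a v b) = 1 := hsf
      have h2 := hsg
      linarith
    · rintro ⟨x, a, b⟩ hq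
      simp only at hq ⊢
      rcases eq_or_ne (pA a) 0 with hA0 | hA0
      · have h1 : ∀ x', (∑ v, ∑ b', p x' a v b') = 0 :=
          sum_zero1 (fun x' => hnnXA x' a) (by rw [← hpA, hA0])
        have h2 : ∀ v, (∑ b', p x a v b') = 0 :=
          sum_zero1 (fun v => Finset.sum_nonneg fun b' _ => hnn x a v b') (h1 x)
        refine Finset.sum_eq_zero fun v _ => ?_
        exact sum_zero1 (fun b' => hnn x a v b') (h2 v) b
      · rcases (div_eq_zero_iff.mp hq) with h1 | h1
        · rcases mul_eq_zero.mp h1 with h2 | h2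
          · have h3 : ∀ v, (∑ b', p x a v b') = 0 :=
              sum_zero1 (fun v => Finset.sum_nonneg fun b' _ => hnn x a v b') h2
            refine Finset.sum_eq_zero fun v _ => ?_
            exact sum_zero1 (fun b' => hnn x a v b') (h3 v) b
          · have h3 : ∀ x', (∑ v, p x' a v b) = 0 :=
              sum_zero1 (fun x' => hnnXAB x' a b) (by rw [← hpAB, h2])
            exact h3 x
        · exact absurd h1 hA0
  have hDPI : (∑ a, ∑ b, pAB a b * Real.log (pAB a b / (pA a * pB b)))
      ≤ ∑ x, ∑ b, pXB x b * Real.log (pXB x b / (pX x * pB b)) := by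
    rw [hIB_eq, hIAB_eq, ← sub_nonneg, ← Finset.sum_sub_distrib]
    simp only [← Finset.sum_sub_distrib]
    calc (0 : ℝ) ≤ ∑ x, ∑ a, ∑ b, (∑ v, p x a v b) *
          Real.log ((∑ v, p x a v b) / ((∑ v, ∑ b', p x a v b') * pAB a b / pA a)) := hKL
      _ = ∑ x, ∑ a, ∑ b,
          ((∑ v, p x a v b) * Real.log (pXB x b / (pX x * pB b))
            - (∑ v, p x a v b) * Real.log (pAB a b / (pA a * pB b))) := by
          exact Finset.sum_congr rfl fun x _ => Finset.sum_congr rfl fun a _ =>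
            Finset.sum_congr rfl fun b _ => (stepC x a b).symm
  rw [hRHS, hIV]
  exact add_le_add_left hDPI _
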